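/- (Lukács–Markov) Let p ∈ ℝ[x] with p ≥ 0 on [a,b] where a < b. (i) If deg p = 2m then there exist f, g ∈ ℝ[x] with deg f ≤ m and deg g ≤ m-1 such that p(x) = f(x)² + (x-a)(b-x)·g(x)². (ii) If deg p = 2m+1 then there exist f, g ∈ ℝ[x] with deg f ≤ m and deg g ≤ m such that p(x) = (x-a)·f(x)² + (b-x)·g(x)². -/

import Mathlib

open Polynomial

/-- Even-type representation: `P = f^2 + (x-a)(b-x) g^2` with degree bounds. -/
def IsE (a b : ℝ) (m : ℕ) (P : ℝ → ℝ) : Prop :=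
  ∃ f g : ℝ[X], f.natDegree ≤ m ∧ (g = 0 ∨ g.natDegree + 1 ≤ m) ∧
    ∀ x : ℝ, P x = f.eval x ^ 2 + (x - a) * (b - x) * g.eval x ^ 2

/-- Odd-type representation: `P = (x-a) f^2 + (b-x) g^2` with degree bounds. -/
def IsO (a b : ℝ) (m : ℕ) (P : ℝ → ℝ) : Prop :=
  ∃ f g : ℝ[X], f.natDegree ≤ m ∧ g.natDegree ≤ m ∧
    ∀ x : ℝ, P x = (x - a) * f.eval x ^ 2 + (b - x) * g.eval x ^ 2

lemma IsE.congr {a b : ℝ} {m : ℕ} {P Q : ℝ → ℝ} (h : IsE a b m P) (hPQ : ∀ x, Q x = P x) :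
    IsE a b m Q := by
  obtain ⟨f, g, h1, h2, h3⟩ := h
  exact ⟨f, g, h1, h2, fun x => (hPQ x).trans (h3 x)⟩

lemma IsO.congr {a b : ℝ} {m : ℕ} {P Q : ℝ → ℝ} (h : IsO a b m P) (hPQ : ∀ x, Q x = P x) :
    IsO a b m Q := by
  obtain ⟨f, g, h1, h2, h3⟩ := h
  exact ⟨f, g, h1, h2, fun x => (hPQ x).trans (h3 x)⟩

lemma natDegree_CbX : (C b - X : ℝ[X]).natDegree = 1 := by
  have : (C b - X : ℝ[X]) = -(X - C b) := by ring
  rw [this, natDegree_neg, natDegree_X_sub_C]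

lemma IsE.mul_isE {a b : ℝ} {m₁ m₂ : ℕ} {P Q : ℝ → ℝ} (hP : IsE a b m₁ P)
    (hQ : IsE a b m₂ Q) : IsE a b (m₁ + m₂) (fun x => P x * Q x) := by
  obtain ⟨f₁, g₁, hf₁, hg₁, h₁⟩ := hP
  obtain ⟨f₂, g₂, hf₂, hg₂, h₂⟩ := hQ
  refine ⟨f₁ * f₂ + (X - C a) * (C b - X) * (g₁ * g₂), f₁ * g₂ - f₂ * g₁, ?_, ?_, ?_⟩
  · apply le_trans (natDegree_add_le _ _)
    have t1 : (f₁ * f₂).natDegree ≤ m₁ + m₂ :=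
      le_trans (natDegree_mul_le) (by omega)
    rcases hg₁ with rfl | hg₁
    · simp [t1]
    rcases hg₂ with rfl | hg₂
    · simp [t1]
    have t2 : ((X - C a) * (C b - X) * (g₁ * g₂)).natDegree ≤ m₁ + m₂ := by
      refine le_trans natDegree_mul_le ?_
      have := natDegree_mul_le (p := (X - C a : ℝ[X])) (q := (C b - X))
      have := natDegree_mul_le (p := g₁) (q := g₂)
      simp only [natDegree_X_sub_C, natDegree_CbX] at *
      omega
    omega
  · rcases hg₁ with rfl | hg₁ <;> rcases hg₂ with rfl | hg₂
    · left; simp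
    · right
      have : (f₁ * g₂ - f₂ * 0 : ℝ[X]) = f₁ * g₂ := by ring
      rw [this]
      have := natDegree_mul_le (p := f₁) (q := g₂); omega
    · right
      have : (f₁ * 0 - f₂ * g₁ : ℝ[X]) = -(f₂ * g₁) := by ring
      rw [this, natDegree_neg]
      have := natDegree_mul_le (p := f₂) (q := g₁); omega
    · right
      refine le_trans (Nat.add_le_add_right (natDegree_sub_le _ _) 1) ?_
      have := natDegree_mul_le (p := f₁) (q := g₂)
      have := natDegree_mul_le (p := f₂) (q := g₁)
      omega
  · intro x
    show P x * Q x = _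
    rw [h₁ x, h₂ x]
    simp only [eval_add, eval_mul, eval_sub, eval_X, eval_C]
    ring
lemma IsE.mul_isO {a b : ℝ} {m₁ m₂ : ℕ} {P Q : ℝ → ℝ} (hP : IsE a b m₁ P)
    (hQ : IsO a b m₂ Q) : IsO a b (m₁ + m₂) (fun x => P x * Q x) := by
  obtain ⟨f₁, g₁, hf₁, hg₁, h₁⟩ := hP
  obtain ⟨f₂, g₂, hf₂, hg₂, h₂⟩ := hQ
  refine ⟨f₁ * f₂ + (C b - X) * (g₁ * g₂), f₁ * g₂ - (X - C a) * (g₁ * f₂), ?_, ?_, ?_⟩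
  · apply le_trans (natDegree_add_le _ _)
    have t1 : (f₁ * f₂).natDegree ≤ m₁ + m₂ := le_trans natDegree_mul_le (by omega)
    rcases hg₁ with rfl | hg₁
    · simp [t1]
    have t2 : ((C b - X) * (g₁ * g₂)).natDegree ≤ m₁ + m₂ := by
      refine le_trans natDegree_mul_le ?_
      have := natDegree_mul_le (p := g₁) (q := g₂)
      simp only [natDegree_CbX]
      omega
    omega
  · apply le_trans (natDegree_sub_le _ _)
    have t1 : (f₁ * g₂).natDegree ≤ m₁ + m₂ := le_trans natDegree_mul_le (by omega)
    rcases hg₁ with rfl | hg₁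
    · simp [t1]
    have t2 : ((X - C a) * (g₁ * f₂)).natDegree ≤ m₁ + m₂ := by
      refine le_trans natDegree_mul_le ?_
      have := natDegree_mul_le (p := g₁) (q := f₂)
      simp only [natDegree_X_sub_C]
      omega
    omega
  · intro x
    show P x * Q x = _
    rw [h₁ x, h₂ x]
    simp only [eval_add, eval_mul, eval_sub, eval_X, eval_C]
    ring

lemma IsO.mul_isO {a b : ℝ} {m₁ m₂ : ℕ} {P Q : ℝ → ℝ} (hP : IsO a b m₁ P)
    (hQ : IsO a b m₂ Q) : IsE a b (m₁ + m₂ + 1) (fun x => P x * Q x) := by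
  obtain ⟨f₁, g₁, hf₁, hg₁, h₁⟩ := hP
  obtain ⟨f₂, g₂, hf₂, hg₂, h₂⟩ := hQ
  refine ⟨(X - C a) * (f₁ * f₂) + (C b - X) * (g₁ * g₂), f₁ * g₂ - f₂ * g₁, ?_, ?_, ?_⟩
  · apply le_trans (natDegree_add_le _ _)
    have t1 : ((X - C a) * (f₁ * f₂)).natDegree ≤ m₁ + m₂ + 1 := by
      refine le_trans natDegree_mul_le ?_
      have := natDegree_mul_le (p := f₁) (q := f₂)
      simp only [natDegree_X_sub_C]; omega
    have t2 : ((C b - X) * (g₁ * g₂)).natDegree ≤ m₁ + m₂ + 1 := by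
      refine le_trans natDegree_mul_le ?_
      have := natDegree_mul_le (p := g₁) (q := g₂)
      simp only [natDegree_CbX]; omega
    omega
  · right
    refine Nat.add_le_add_right (le_trans (natDegree_sub_le _ _) ?_) 1
    have := natDegree_mul_le (p := f₁) (q := g₂)
    have := natDegree_mul_le (p := f₂) (q := g₁)
    omega
  · intro x
    show P x * Q x = _
    rw [h₁ x, h₂ x]
    simp only [eval_add, eval_mul, eval_sub, eval_X, eval_C]
    ring
lemma isO_linear_left {a b r : ℝ} (hab : a < b) (hr : r ≤ a) :
    IsO a b 0 (fun x => x - r) := by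
  have hba : b - a ≠ 0 := by linarith
  refine ⟨C (Real.sqrt ((b - r) / (b - a))), C (Real.sqrt ((a - r) / (b - a))), by
    simp, by simp, ?_⟩
  intro x
  simp only [eval_C]
  rw [Real.sq_sqrt (div_nonneg (by linarith) (by linarith)),
    Real.sq_sqrt (div_nonneg (by linarith) (by linarith))]
  field_simp
  ring

lemma isO_linear_right {a b r : ℝ} (hab : a < b) (hr : b ≤ r) :
    IsO a b 0 (fun x => r - x) := by
  have hba : b - a ≠ 0 := by linarith
  refine ⟨C (Real.sqrt ((r - b) / (b - a))), C (Real.sqrt ((r - a) / (b - a))), by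
    simp, by simp, ?_⟩
  intro x
  simp only [eval_C]
  rw [Real.sq_sqrt (div_nonneg (by linarith) (by linarith)),
    Real.sq_sqrt (div_nonneg (by linarith) (by linarith))]
  field_simp
  ring

lemma isE_sq (a b r : ℝ) : IsE a b 1 (fun x => (x - r) ^ 2) := by
  exact ⟨X - C r, 0, by simp [natDegree_X_sub_C], Or.inl rfl, by intro x; simp⟩

lemma isE_quad {a b s t : ℝ} (hab : a < b) (hst : s ^ 2 < 4 * t) :
    IsE a b 1 (fun x => x ^ 2 + s * x + t) := by
  -- find u ≥ 0 with (s-(a+b)u)^2 = 4(1+u)(t+abu), via IVT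
  have hc2 : (0:ℝ) < (a - b) ^ 2 := by
    have : a - b ≠ 0 := by linarith
    positivity
  set K := 2 * s * (a + b) + 4 * a * b + 4 * t with hK
  set φ : ℝ → ℝ := fun u => (a - b) ^ 2 * u ^ 2 - K * u + (s ^ 2 - 4 * t) with hφ
  set M : ℝ := max 1 ((|K| + |s ^ 2 - 4 * t| + 1) / (a - b) ^ 2) with hM
  have hM1 : (1:ℝ) ≤ M := le_max_left _ _
  have hM0 : (0:ℝ) ≤ M := by linarith
  have hM2 : (|K| + |s ^ 2 - 4 * t| + 1) ≤ (a - b) ^ 2 * M := by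
    rw [← div_le_iff₀' hc2]; exact le_max_right _ _
  have hφM : 0 ≤ φ M := by
    show 0 ≤ (a - b) ^ 2 * M ^ 2 - K * M + (s ^ 2 - 4 * t)
    nlinarith [mul_le_mul_of_nonneg_right hM2 hM0,
      mul_le_mul_of_nonneg_right (le_abs_self K) hM0,
      neg_abs_le (s ^ 2 - 4 * t), abs_nonneg (s ^ 2 - 4 * t), abs_nonneg K]
  have hφ0 : φ 0 ≤ 0 := by
    show (a - b) ^ 2 * 0 ^ 2 - K * 0 + (s ^ 2 - 4 * t) ≤ 0
    nlinarith
  have hcont : ContinuousOn φ (Set.Icc 0 M) := by fun_prop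
  obtain ⟨u, hu, hu0⟩ := intermediate_value_Icc hM0 hcont ⟨hφ0, hφM⟩
  have hunn : 0 ≤ u := hu.1
  have hφu : (a - b) ^ 2 * u ^ 2 - K * u + (s ^ 2 - 4 * t) = 0 := hu0
  have hroot : (s - (a + b) * u) ^ 2 = 4 * (1 + u) * (t + a * b * u) := by
    rw [hK] at hφu
    linear_combination hφu
  set α := Real.sqrt (1 + u) with hα
  have hα2 : α ^ 2 = 1 + u := Real.sq_sqrt (by linarith)
  have hαpos : 0 < α := Real.sqrt_pos.2 (by linarith)
  set β := (s - (a + b) * u) / (2 * α) with hβ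
  have h2ab : 2 * α * β = s - (a + b) * u := by
    rw [hβ]; field_simp
  have h4 : (2 * α * β) ^ 2 = 4 * (1 + u) * (t + a * b * u) := by rw [h2ab, hroot]
  have h5 : 4 * (1 + u) * β ^ 2 = 4 * (1 + u) * (t + a * b * u) := by
    linear_combination h4 + (-(4 * β ^ 2)) * hα2
  have hβ2 : β ^ 2 = t + a * b * u :=
    mul_left_cancel₀ (ne_of_gt (by linarith : (0:ℝ) < 4 * (1 + u))) h5
  set γ := Real.sqrt u with hγ
  have hγ2 : γ ^ 2 = u := Real.sq_sqrt hunn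
  refine ⟨C α * X + C β, C γ, ?_, ?_, ?_⟩
  · apply le_trans (natDegree_add_le _ _)
    have h1 : (C α * X : ℝ[X]).natDegree ≤ 1 :=
      le_trans natDegree_mul_le (by simp)
    simp only [natDegree_C]
    omega
  · right; simp
  · intro x
    show x ^ 2 + s * x + t = _
    simp only [eval_add, eval_mul, eval_C, eval_X]
    linear_combination (-(x ^ 2)) * hα2 + (-x) * h2ab + (-1) * hβ2
      + (-((x - a) * (b - x))) * hγ2
lemma ev_nonneg_left {q : ℝ[X]} {c d : ℝ} (hcd : c < d)
    (h : ∀ x ∈ Set.Ioc c d, 0 ≤ q.eval x) : 0 ≤ q.eval c := by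
  have hc : Filter.Tendsto (fun x => q.eval x) (nhdsWithin c (Set.Ioi c))
      (nhds (q.eval c)) := q.continuous.continuousAt.continuousWithinAt
  exact ge_of_tendsto hc (Filter.eventually_of_mem (Ioc_mem_nhdsGT hcd) h)

lemma ev_nonneg_right {q : ℝ[X]} {c d : ℝ} (hcd : c < d)
    (h : ∀ x ∈ Set.Ico c d, 0 ≤ q.eval x) : 0 ≤ q.eval d := by
  have hc : Filter.Tendsto (fun x => q.eval x) (nhdsWithin d (Set.Iio d))
      (nhds (q.eval d)) := q.continuous.continuousAt.continuousWithinAt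
  exact ge_of_tendsto hc (Filter.eventually_of_mem (Ico_mem_nhdsLT hcd) h)
lemma lukacs_main (a b : ℝ) (hab : a < b) : ∀ n : ℕ, ∀ p : ℝ[X], p.natDegree = n →
    (∀ x ∈ Set.Icc a b, 0 ≤ p.eval x) →
    (∀ m, n = 2 * m → IsE a b m (fun x => p.eval x)) ∧
    (∀ m, n = 2 * m + 1 → IsO a b m (fun x => p.eval x)) := by
  intro n
  induction n using Nat.strong_induction_on with
  | _ n IH =>
  intro p hdeg hnn
  rcases Nat.eq_zero_or_pos n with rfl | hn
  · constructor
    · intro m hm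
      have hm0 : m = 0 := by omega
      subst hm0
      have hc : p = C (p.coeff 0) := eq_C_of_natDegree_eq_zero hdeg
      have h0 : 0 ≤ p.coeff 0 := by
        have := hnn a ⟨le_refl a, le_of_lt hab⟩
        rw [hc] at this; simpa using this
      exact ⟨C (Real.sqrt (p.coeff 0)), 0, by simp, Or.inl rfl, fun x => by
        rw [hc]; simp [Real.sq_sqrt h0]⟩
    · intro m hm; omega
  have hp0 : p ≠ 0 := fun h => by rw [h] at hdeg; simp at hdeg; omega
  by_cases hroot : ∃ r : ℝ, p.IsRoot r
  · obtain ⟨r, hr⟩ := hroot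
    obtain ⟨h, hph⟩ := dvd_iff_isRoot.mpr hr
    have hh0 : h ≠ 0 := fun h0 => hp0 (by rw [hph, h0, mul_zero])
    have hdeg' : n = 1 + h.natDegree := by
      rw [← hdeg, hph, natDegree_mul (X_sub_C_ne_zero r) hh0, natDegree_X_sub_C]
    have hpe : ∀ x : ℝ, p.eval x = (x - r) * h.eval x := fun x => by
      rw [hph]; simp
    rcases le_or_gt r a with hra | hra
    · -- left factor (x - r)
      have hIoc : ∀ x ∈ Set.Ioc a b, 0 ≤ h.eval x := by
        intro x hx
        have hxr : 0 < x - r := by linarith [hx.1]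
        have hpx := hnn x ⟨le_of_lt hx.1, hx.2⟩
        nlinarith [hpe x]
      have hhnn : ∀ x ∈ Set.Icc a b, 0 ≤ h.eval x := by
        intro x hx
        rcases eq_or_lt_of_le hx.1 with rfl | hax
        · exact ev_nonneg_left hab hIoc
        · exact hIoc x ⟨hax, hx.2⟩
      have hIH := IH h.natDegree (by omega) h rfl hhnn
      constructor
      · intro m hm
        have hm1 : 1 ≤ m := by omega
        have hO := hIH.2 (m - 1) (by omega)
        have hprod := (isO_linear_left hab hra).mul_isO hO
        have harith : 0 + (m - 1) + 1 = m := by omega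
        rw [harith] at hprod
        exact hprod.congr fun x => hpe x
      · intro m hm
        have hE := hIH.1 m (by omega)
        have hprod := hE.mul_isO (isO_linear_left hab hra)
        have harith : m + 0 = m := by omega
        rw [harith] at hprod
        exact hprod.congr fun x => by rw [hpe x]; ring
    · rcases le_or_gt b r with hrb | hrb
      · -- right factor (r - x), p = (r - x) * (-h)
        have hpe' : ∀ x : ℝ, p.eval x = (r - x) * (-h).eval x := fun x => by
          rw [hpe x]; simp; ring
        have hIco : ∀ x ∈ Set.Ico a b, 0 ≤ (-h).eval x := by
          intro x hx
          have hxr : 0 < r - x := by linarith [hx.2]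
          have hpx := hnn x ⟨hx.1, le_of_lt hx.2⟩
          nlinarith [hpe' x]
        have hhnn : ∀ x ∈ Set.Icc a b, 0 ≤ (-h).eval x := by
          intro x hx
          rcases eq_or_lt_of_le hx.2 with rfl | hxb
          · exact ev_nonneg_right hab hIco
          · exact hIco x ⟨hx.1, hxb⟩
        have hdneg : (-h).natDegree = h.natDegree := natDegree_neg h
        have hIH := IH (-h).natDegree (by omega) (-h) rfl hhnn
        constructor
        · intro m hm
          have hm1 : 1 ≤ m := by omega
          have hO := hIH.2 (m - 1) (by omega)
          have hprod := (isO_linear_right hab hrb).mul_isO hO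
          have harith : 0 + (m - 1) + 1 = m := by omega
          rw [harith] at hprod
          exact hprod.congr fun x => hpe' x
        · intro m hm
          have hE := hIH.1 m (by omega)
          have hprod := hE.mul_isO (isO_linear_right hab hrb)
          have harith : m + 0 = m := by omega
          rw [harith] at hprod
          exact hprod.congr fun x => by rw [hpe' x]; ring
      · -- interior root: a < r < b, double root
        have hIocr : ∀ x ∈ Set.Ioc r b, 0 ≤ h.eval x := by
          intro x hx
          have hxr : 0 < x - r := by linarith [hx.1]
          have hpx := hnn x ⟨by linarith [hx.1], hx.2⟩
          nlinarith [hpe x]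
        have hIcor : ∀ x ∈ Set.Ico a r, 0 ≤ (-h).eval x := by
          intro x hx
          have hxr : 0 < r - x := by linarith [hx.2]
          have hpx := hnn x ⟨hx.1, by linarith [hx.2]⟩
          simp only [eval_neg]
          nlinarith [hpe x]
        have h1 : 0 ≤ h.eval r := ev_nonneg_left hrb hIocr
        have h2 : 0 ≤ (-h).eval r := ev_nonneg_right hra hIcor
        have hr2 : h.IsRoot r := by
          simp only [eval_neg] at h2
          exact le_antisymm (by linarith) h1
        obtain ⟨h₂, hh₂⟩ := dvd_iff_isRoot.mpr hr2
        have hh₂0 : h₂ ≠ 0 := fun h0 => hh0 (by rw [hh₂, h0, mul_zero])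
        have hdeg2 : n = 2 + h₂.natDegree := by
          rw [hdeg', hh₂, natDegree_mul (X_sub_C_ne_zero r) hh₂0, natDegree_X_sub_C]
          omega
        have hpe2 : ∀ x : ℝ, p.eval x = (x - r) ^ 2 * h₂.eval x := fun x => by
          rw [hph, hh₂]; simp; ring
        have hIoc2 : ∀ x ∈ Set.Ioc r b, 0 ≤ h₂.eval x := by
          intro x hx
          have hne : x - r ≠ 0 := by have := hx.1; intro h0; linarith
          have hxr : 0 < (x - r) ^ 2 := by positivity
          have hpx := hnn x ⟨by linarith [hx.1], hx.2⟩
          nlinarith [hpe2 x]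
        have hh₂nn : ∀ x ∈ Set.Icc a b, 0 ≤ h₂.eval x := by
          intro x hx
          rcases eq_or_ne x r with rfl | hxr
          · exact ev_nonneg_left hrb hIoc2
          · have hne : x - r ≠ 0 := fun h0 => hxr (by linarith)
            have hx2 : 0 < (x - r) ^ 2 := by positivity
            have hpx := hnn x hx
            nlinarith [hpe2 x]
        have hIH := IH h₂.natDegree (by omega) h₂ rfl hh₂nn
        constructor
        · intro m hm
          have hm1 : 1 ≤ m := by omega
          have hE := hIH.1 (m - 1) (by omega)
          have hprod := (isE_sq a b r).mul_isE hE
          have harith : 1 + (m - 1) = m := by omega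
          rw [harith] at hprod
          exact hprod.congr fun x => hpe2 x
        · intro m hm
          have hm1 : 1 ≤ m := by omega
          have hO := hIH.2 (m - 1) (by omega)
          have hprod := (isE_sq a b r).mul_isO hO
          have harith : 1 + (m - 1) = m := by omega
          rw [harith] at hprod
          exact hprod.congr fun x => hpe2 x
  · -- no real root: extract a positive quadratic factor
    have hd0 : p.degree ≠ 0 := by
      rw [degree_eq_natDegree hp0, hdeg]
      simp only [ne_eq, Nat.cast_eq_zero]
      omega
    obtain ⟨z, hz⟩ : ∃ z : ℂ, aeval z p = 0 := IsAlgClosed.exists_aeval_eq_zero ℂ p hd0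
    have him : z.im ≠ 0 := by
      intro h0
      apply hroot
      lift z to ℝ using h0
      erw [aeval_ofReal, RCLike.ofReal_eq_zero] at hz
      exact ⟨z, hz⟩
    obtain ⟨h, hph⟩ := p.quadratic_dvd_of_aeval_eq_zero_im_ne_zero hz him
    set q : ℝ[X] := X ^ 2 - C (2 * z.re) * X + C (‖z‖ ^ 2) with hqdef
    have hqev : ∀ x : ℝ, q.eval x = x ^ 2 + (-(2 * z.re)) * x + ‖z‖ ^ 2 := by
      intro x; rw [hqdef]; simp; ring
    have hnormsq : ‖z‖ ^ 2 = z.re ^ 2 + z.im ^ 2 := by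
      rw [Complex.sq_norm, Complex.normSq_apply]; ring
    have himsq : 0 < z.im ^ 2 := by
      rcases him.lt_or_gt with h' | h' <;> nlinarith
    have hdisc : (-(2 * z.re)) ^ 2 < 4 * (‖z‖ ^ 2) := by
      rw [hnormsq]; nlinarith
    have hqdeg : q.natDegree = 2 := by rw [hqdef]; compute_degree!
    have hq0 : q ≠ 0 := fun h0 => by rw [h0] at hqdeg; simp at hqdeg
    have hh0 : h ≠ 0 := fun h0 => hp0 (by rw [hph, h0, mul_zero])
    have hdeg2 : n = 2 + h.natDegree := by
      rw [← hdeg, hph, natDegree_mul hq0 hh0, hqdeg]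
    have hqpos : ∀ x : ℝ, 0 < q.eval x := by
      intro x
      rw [hqev x, hnormsq]
      nlinarith [sq_nonneg (x - z.re)]
    have hpe : ∀ x : ℝ, p.eval x = q.eval x * h.eval x := fun x => by
      rw [hph]; simp
    have hhnn : ∀ x ∈ Set.Icc a b, 0 ≤ h.eval x := by
      intro x hx
      have hpx := hnn x hx
      nlinarith [hpe x, hqpos x]
    have hE1 : IsE a b 1 (fun x => q.eval x) :=
      (isE_quad hab hdisc).congr fun x => hqev x
    have hIH := IH h.natDegree (by omega) h rfl hhnn
    constructor
    · intro m hm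
      have hm1 : 1 ≤ m := by omega
      have hE := hIH.1 (m - 1) (by omega)
      have hprod := hE1.mul_isE hE
      have harith : 1 + (m - 1) = m := by omega
      rw [harith] at hprod
      exact hprod.congr fun x => hpe x
    · intro m hm
      have hm1 : 1 ≤ m := by omega
      have hO := hIH.2 (m - 1) (by omega)
      have hprod := hE1.mul_isO hO
      have harith : 1 + (m - 1) = m := by omega
      rw [harith] at hprod
      exact hprod.congr fun x => hpe x

theorem stmt17 (a b : ℝ) (hab : a < b) (p : ℝ[X])
    (hp : ∀ x ∈ Set.Icc a b, 0 ≤ p.eval x) :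
    (∀ m : ℕ, p.natDegree = 2 * m →
      ∃ f g : ℝ[X], f.natDegree ≤ m ∧ g.natDegree ≤ m - 1 ∧
        ∀ x : ℝ, p.eval x = f.eval x ^ 2 + (x - a) * (b - x) * g.eval x ^ 2) ∧
    (∀ m : ℕ, p.natDegree = 2 * m + 1 →
      ∃ f g : ℝ[X], f.natDegree ≤ m ∧ g.natDegree ≤ m ∧
        ∀ x : ℝ, p.eval x = (x - a) * f.eval x ^ 2 + (b - x) * g.eval x ^ 2) := by
  have key := lukacs_main a b hab p.natDegree p rfl hp
  constructor
  · intro m hm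
    obtain ⟨f, g, h1, h2, h3⟩ := key.1 m hm
    refine ⟨f, g, h1, ?_, h3⟩
    rcases h2 with rfl | h2
    · simp
    · omega
  · intro m hm
    exact key.2 m hm
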